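/- Let 0<α<1 and ω_n = ((n+1)^α − n^α)/Γ(α+1) for n = 0,1,2,…. Then for every complex number ξ with |ξ| < 1, |Σ_{n=0}^∞ ω_n ξ^n| ≥ 1/(2Γ(α+1)). -/

import Mathlib

open Real

/-- Midpoint quadrature weights `ω_m = ((m+1)^α − m^α)/Γ(α+1)`. -/
noncomputable def omegaW (α : ℝ) (m : ℕ) : ℝ :=
  (((m : ℝ) + 1) ^ α - (m : ℝ) ^ α) / Real.Gamma (α + 1)

open Finset Set Filter Topology


/-- Fejér positivity: `2·∑_{k≤n} ∑_{j≤k} Re z^j = (n+1) + |∑_{k≤n} z^k|²` for `|z|=1`. -/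
lemma aux_fejer_id (z : ℂ) (hz : ‖z‖ = 1) (n : ℕ) :
    2 * ∑ k ∈ range (n+1), ∑ j ∈ range (k+1), (z^j).re
      = ((n:ℝ)+1) + Complex.normSq (∑ k ∈ range (n+1), z^k) := by
  have hzz : z * (starRingEnd ℂ) z = 1 := by
    rw [Complex.mul_conj]; norm_cast
    rw [Complex.normSq_eq_norm_sq, hz]; norm_num
  induction n with
  | zero => simp [Complex.normSq]; norm_num
  | succ n ih =>
    have hS : ∑ k ∈ range (n+2), z^k = (∑ k ∈ range (n+1), z^k) + z^(n+1) :=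
      sum_range_succ _ _
    have hre : ((∑ k ∈ range (n+1), z^k) * (starRingEnd ℂ) (z^(n+1))).re
        = (∑ j ∈ range (n+2), (z^j).re) - 1 := by
      have h1 : (∑ k ∈ range (n+1), z^k) * (starRingEnd ℂ) (z^(n+1))
          = ∑ j ∈ range (n+1), ((starRingEnd ℂ) z)^(n+1-j) := by
        rw [sum_mul]
        refine sum_congr rfl fun j hj => ?_
        have hj' : j ≤ n := Nat.lt_succ_iff.mp (mem_range.mp hj)
        have : (starRingEnd ℂ) (z^(n+1)) = ((starRingEnd ℂ) z)^j * ((starRingEnd ℂ) z)^(n+1-j) := by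
          rw [← pow_add, map_pow]
          congr 1
          omega
        rw [this, ← mul_assoc, ← mul_pow, hzz, one_pow, one_mul]
      rw [h1]
      have h2 : (∑ j ∈ range (n+1), ((starRingEnd ℂ) z)^(n+1-j)).re
          = ∑ j ∈ range (n+1), (z^(n+1-j)).re := by
        rw [Complex.re_sum]
        exact sum_congr rfl fun j _ => by rw [← map_pow, Complex.conj_re]
      rw [h2]
      have h3 : ∑ j ∈ range (n+1), (z^(n+1-j)).re = ∑ j ∈ range (n+1), (z^(j+1)).re := by
        have := sum_range_reflect (fun j => (z^(j+1)).re) (n+1)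
        refine Eq.trans ?_ this
        refine sum_congr rfl fun j hj => ?_
        have hj' : j ≤ n := Nat.lt_succ_iff.mp (mem_range.mp hj)
        congr 2
        omega
      rw [h3]
      have h4 : ∑ j ∈ range (n+2), (z^j).re = (∑ j ∈ range (n+1), (z^(j+1)).re) + (z^0).re :=
        sum_range_succ' _ _
      rw [h4]
      simp
    have hnsq : Complex.normSq (∑ k ∈ range (n+2), z^k)
        = Complex.normSq (∑ k ∈ range (n+1), z^k)
          + 2 * ((∑ j ∈ range (n+2), (z^j).re) - 1) + 1 := by
      rw [hS, Complex.normSq_add, hre]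
      have : Complex.normSq (z^(n+1)) = 1 := by
        rw [map_pow]
        have : Complex.normSq z = 1 := by
          rw [Complex.normSq_eq_norm_sq, hz]; norm_num
        rw [this, one_pow]
      rw [this]; ring
    rw [sum_range_succ _ (n+1), hnsq]
    push_cast
    linarith [ih]

lemma aux_fejer (z : ℂ) (hz : ‖z‖ = 1) (n : ℕ) :
    ((n:ℝ)+1) ≤ 2 * ∑ k ∈ range (n+1), ∑ j ∈ range (k+1), (z^j).re := by
  rw [aux_fejer_id z hz n]
  linarith [Complex.normSq_nonneg (∑ k ∈ range (n+1), z^k)]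


/-- Double Abel summation identity, stated with abstract partial-sum sequences. -/
lemma aux_abel_id (c p P Q : ℕ → ℝ) (hP0 : P 0 = p 0) (hPs : ∀ n, P (n+1) = P n + p (n+1))
    (hQ0 : Q 0 = P 0) (hQs : ∀ n, Q (n+1) = Q n + P (n+1)) (N : ℕ) :
    ∑ n ∈ range (N+3), c n * p n
      = (∑ n ∈ range (N+1), (c n - 2*c (n+1) + c (n+2)) * Q n)
        + (c (N+1) - c (N+2)) * Q (N+1) + c (N+2) * P (N+2) := by
  induction N with
  | zero =>
    have hp1 : P 1 = p 0 + p 1 := by rw [show (1:ℕ) = 0+1 from rfl, hPs 0, hP0]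
    have hp2 : P 2 = P 1 + p 2 := by rw [show (2:ℕ) = 1+1 from rfl, hPs 1]
    have hq1 : Q 1 = Q 0 + P 1 := by rw [show (1:ℕ) = 0+1 from rfl, hQs 0]
    norm_num [sum_range_succ, hp2, hq1, hQ0, hP0, hp1]
    ring
  | succ N ih =>
    have hL : ∑ n ∈ range (N+1+3), c n * p n
        = (∑ n ∈ range (N+3), c n * p n) + c (N+3) * p (N+3) := by
      rw [show N+1+3 = (N+3)+1 from rfl, sum_range_succ]
    rw [hL, ih, show N+1+1 = N+2 from rfl, show N+1+2 = N+3 from rfl,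
      sum_range_succ _ (N+1), hQs (N+1), hPs (N+2)]
    ring

lemma aux_abel_id2 (c : ℕ → ℝ) (M : ℕ) :
    ∑ n ∈ range M, (c n - 2*c (n+1) + c (n+2)) * ((n:ℝ)+1)
      = (c 0 - c M) - M * (c M - c (M+1)) := by
  induction M with
  | zero => simp
  | succ M ih =>
    rw [sum_range_succ, ih]
    push_cast
    ring

/-- Key lemma: lower bound for sums with convex decreasing coefficients against a
sequence with Fejér-positive partial sums. -/
lemma aux_key (c p : ℕ → ℝ)
    (hsum : Summable (fun n => c n * p n))
    (hcpos : ∀ n, 0 ≤ c n)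
    (hcd : ∀ n, c (n+1) ≤ c n)
    (hcc : ∀ n, 2 * c (n+1) ≤ c n + c (n+2))
    (hc1 : Tendsto (fun n => c n * ((n:ℝ)+1)) atTop (𝓝 0))
    (hp : ∀ n, |p n| ≤ 1)
    (hQ : ∀ n : ℕ, ((n:ℝ)+1) ≤ 2 * ∑ k ∈ range (n+1), ∑ j ∈ range (k+1), p j) :
    c 0 / 2 ≤ ∑' n, c n * p n := by
  have hc0 : Tendsto c atTop (𝓝 0) := by
    refine squeeze_zero (g := fun n => c n * ((n:ℝ)+1)) hcpos (fun n => ?_) hc1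
    show c n ≤ c n * ((n:ℝ)+1)
    nlinarith [mul_nonneg (hcpos n) (Nat.cast_nonneg n : (0:ℝ) ≤ n)]
  have hPb : ∀ n : ℕ, |∑ j ∈ range (n+1), p j| ≤ (n:ℝ)+1 := by
    intro n
    calc |∑ j ∈ range (n+1), p j| ≤ ∑ j ∈ range (n+1), |p j| := abs_sum_le_sum_abs _ _
    _ ≤ ∑ _j ∈ range (n+1), (1:ℝ) := sum_le_sum fun j _ => hp j
    _ = (n:ℝ)+1 := by simp
  -- main finite bound
  have main : ∀ N : ℕ, c 0 / 2 ≤ (∑ n ∈ range (N+3), c n * p n)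
      + c (N+2) / 2 + c (N+2) * ((N:ℝ)+3) := by
    intro N
    have hid := aux_abel_id c p (fun n => ∑ j ∈ range (n+1), p j)
      (fun n => ∑ k ∈ range (n+1), ∑ j ∈ range (k+1), p j)
      (by simp) (fun n => sum_range_succ _ _) (by simp) (fun n => sum_range_succ _ _) N
    have hS1 : (1/2) * ((c 0 - c (N+1)) - ((N:ℝ)+1) * (c (N+1) - c (N+2)))
        ≤ ∑ n ∈ range (N+1), (c n - 2*c (n+1) + c (n+2))
            * (∑ k ∈ range (n+1), ∑ j ∈ range (k+1), p j) := by
      have hstep : ∑ n ∈ range (N+1), (c n - 2*c (n+1) + c (n+2)) * (((n:ℝ)+1)/2)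
          ≤ ∑ n ∈ range (N+1), (c n - 2*c (n+1) + c (n+2))
              * (∑ k ∈ range (n+1), ∑ j ∈ range (k+1), p j) := by
        refine sum_le_sum fun n _ => ?_
        have he : 0 ≤ c n - 2*c (n+1) + c (n+2) := by linarith [hcc n]
        have hq : ((n:ℝ)+1)/2 ≤ ∑ k ∈ range (n+1), ∑ j ∈ range (k+1), p j := by
          linarith [hQ n]
        exact mul_le_mul_of_nonneg_left hq he
      refine le_trans (le_of_eq ?_) hstep
      have : ∑ n ∈ range (N+1), (c n - 2*c (n+1) + c (n+2)) * (((n:ℝ)+1)/2)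
          = (1/2) * ∑ n ∈ range (N+1), (c n - 2*c (n+1) + c (n+2)) * ((n:ℝ)+1) := by
        rw [mul_sum]; exact sum_congr rfl fun n _ => by ring
      rw [this, aux_abel_id2 c (N+1)]
      push_cast; ring
    have hS2 : (c (N+1) - c (N+2)) * (((N:ℝ)+2)/2)
        ≤ (c (N+1) - c (N+2)) * (∑ k ∈ range (N+1+1), ∑ j ∈ range (k+1), p j) := by
      refine mul_le_mul_of_nonneg_left ?_ (by linarith [hcd (N+1)])
      have := hQ (N+1); push_cast at this ⊢; linarith
    have hS3 : -(c (N+2) * ((N:ℝ)+3)) ≤ c (N+2) * (∑ j ∈ range (N+2+1), p j) := by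
      have h1 := hPb (N+2)
      push_cast at h1
      have h2 : -((N:ℝ)+3) ≤ ∑ j ∈ range (N+2+1), p j := by
        have := abs_le.mp h1; linarith [this.1]
      nlinarith [hcpos (N+2)]
    rw [hid]
    linarith
  -- take limits
  have hA : Tendsto (fun N => ∑ n ∈ range (N+3), c n * p n) atTop (𝓝 (∑' n, c n * p n)) :=
    (hsum.hasSum.tendsto_sum_nat).comp (tendsto_add_atTop_nat 3)
  have hB : Tendsto (fun N => c (N+2) / 2) atTop (𝓝 0) := by
    have := (hc0.comp (tendsto_add_atTop_nat 2)).div_const 2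
    simpa using this
  have hC : Tendsto (fun N => c (N+2) * ((N:ℝ)+3)) atTop (𝓝 0) := by
    have h := hc1.comp (tendsto_add_atTop_nat 2)
    have heq : (fun N => c (N+2) * ((N:ℝ)+3))
        = (fun n => c n * ((n:ℝ)+1)) ∘ (fun a => a + 2) := by
      funext N; simp only [Function.comp_apply]; push_cast; ring_nf
    rw [heq]; exact h
  have htot : Tendsto (fun N => (∑ n ∈ range (N+3), c n * p n)
      + c (N+2) / 2 + c (N+2) * ((N:ℝ)+3)) atTop (𝓝 (∑' n, c n * p n)) := by
    have := (hA.add hB).add hC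
    simpa using this
  exact ge_of_tendsto' htot main


lemma aux_phi_convex {α : ℝ} (hα0 : 0 < α) (hα1 : α < 1) :
    ConvexOn ℝ (Set.Ici 0) (fun x : ℝ => (x+1)^α - x^α) := by
  set g : ℝ → ℝ := fun x => α * (x+1)^(α-1) - α * x^(α-1) with hg
  have hcont : ContinuousOn (fun x : ℝ => (x+1)^α - x^α) (Set.Ici 0) := by
    apply ContinuousOn.sub
    · exact ((Real.continuous_rpow_const hα0.le).comp (continuous_id.add continuous_const)).continuousOn
    · exact (Real.continuous_rpow_const hα0.le).continuousOn
  have hderiv : ∀ x : ℝ, x ∈ Set.Ioi 0 →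
      HasDerivAt (fun x : ℝ => (x+1)^α - x^α) (g x) x := by
    intro x hx
    have hx0 : (0:ℝ) < x := hx
    have h1 : HasDerivAt (fun x : ℝ => (x+1)^α) (α * (x+1)^(α-1)) x := by
      have hb : HasDerivAt (fun x : ℝ => x + 1) 1 x := (hasDerivAt_id x).add_const 1
      have := (Real.hasDerivAt_rpow_const (x := x+1) (p := α) (Or.inl (by linarith))).comp x hb
      simpa [Function.comp_def] using this
    have h2 : HasDerivAt (fun x : ℝ => x^α) (α * x^(α-1)) x :=
      Real.hasDerivAt_rpow_const (Or.inl hx0.ne')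
    exact h1.sub h2
  have hdiff : DifferentiableOn ℝ (fun x : ℝ => (x+1)^α - x^α) (interior (Set.Ici 0)) := by
    rw [interior_Ici]
    exact fun x hx => ((hderiv x hx).differentiableAt).differentiableWithinAt
  -- deriv agrees with g on Set.Ioi 0
  have hderiv_eq : ∀ x ∈ Set.Ioi (0:ℝ), deriv (fun x : ℝ => (x+1)^α - x^α) x = g x :=
    fun x hx => (hderiv x hx).deriv
  have hgderiv : ∀ x : ℝ, x ∈ Set.Ioi 0 →
      HasDerivAt g (α * (α-1) * (x+1)^(α-2) - α * (α-1) * x^(α-2)) x := by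
    intro x hx
    have hx0 : (0:ℝ) < x := hx
    have h1 : HasDerivAt (fun x : ℝ => (x+1)^(α-1)) ((α-1) * (x+1)^(α-1-1)) x := by
      have hb : HasDerivAt (fun x : ℝ => x + 1) 1 x := (hasDerivAt_id x).add_const 1
      have := (Real.hasDerivAt_rpow_const (x := x+1) (p := α-1) (Or.inl (by linarith))).comp x hb
      simpa [Function.comp_def] using this
    have h2 : HasDerivAt (fun x : ℝ => x^(α-1)) ((α-1) * x^(α-1-1)) x :=
      Real.hasDerivAt_rpow_const (Or.inl hx0.ne')
    have := ((h1.const_mul α).sub (h2.const_mul α))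
    have he : α - 1 - 1 = α - 2 := by ring
    rw [he] at this
    exact this.congr_deriv (by ring)
  apply convexOn_of_deriv2_nonneg (convex_Ici 0) hcont hdiff
  · rw [interior_Ici]
    intro x hx
    have hev : deriv (fun x : ℝ => (x+1)^α - x^α) =ᶠ[nhds x] g :=
      Filter.eventuallyEq_of_mem (Ioi_mem_nhds hx) hderiv_eq
    exact ((hgderiv x hx).differentiableAt.congr_of_eventuallyEq hev).differentiableWithinAt
  · rw [interior_Ici]
    intro x hx
    have hx0 : (0:ℝ) < x := hx
    have hev : deriv (fun x : ℝ => (x+1)^α - x^α) =ᶠ[nhds x] g :=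
      Filter.eventuallyEq_of_mem (Ioi_mem_nhds hx) hderiv_eq
    have : deriv^[2] (fun x : ℝ => (x+1)^α - x^α) x = deriv g x := by
      simp only [Function.iterate_succ, Function.iterate_zero, Function.comp_apply, id]
      exact hev.deriv_eq
    rw [this, (hgderiv x hx).deriv]
    have hle : (x+1)^(α-2) ≤ x^(α-2) :=
      Real.rpow_le_rpow_of_nonpos hx0 (by linarith) (by linarith)
    nlinarith [mul_nonneg (by nlinarith : (0:ℝ) ≤ α * (1 - α))
      (by linarith : (0:ℝ) ≤ x^(α-2) - (x+1)^(α-2))]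



section omegaProps
variable {α : ℝ} (hα0 : 0 < α) (hα1 : α < 1)


include hα0 in
lemma aux_omega_nonneg (n : ℕ) : 0 ≤ omegaW α n := by
  have hΓ : 0 < Real.Gamma (α+1) := Real.Gamma_pos_of_pos (by linarith)
  have : ((n:ℝ))^α ≤ ((n:ℝ)+1)^α :=
    Real.rpow_le_rpow (Nat.cast_nonneg n) (by linarith) hα0.le
  exact div_nonneg (by linarith) hΓ.le

include hα0 hα1 in
lemma aux_omega_anti (n : ℕ) : omegaW α (n+1) ≤ omegaW α n := by
  have hΓ : 0 < Real.Gamma (α+1) := Real.Gamma_pos_of_pos (by linarith)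
  have h := (Real.concaveOn_rpow hα0.le hα1.le).2
    (show ((n:ℝ)) ∈ Set.Ici (0:ℝ) from Set.mem_Ici.mpr (Nat.cast_nonneg n))
    (show ((n:ℝ)+2) ∈ Set.Ici (0:ℝ) from Set.mem_Ici.mpr (by positivity))
    (by norm_num : (0:ℝ) ≤ 1/2) (by norm_num : (0:ℝ) ≤ 1/2) (by norm_num)
  simp only [smul_eq_mul] at h
  rw [show (1/2 : ℝ) * (n:ℝ) + (1/2) * ((n:ℝ)+2) = (n:ℝ)+1 by ring] at h
  unfold omegaW
  rw [div_le_div_iff₀ hΓ hΓ]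
  push_cast
  rw [show ((n:ℝ)+1+1) = (n:ℝ)+2 by ring]
  nlinarith [mul_le_mul_of_nonneg_right
    (by linarith : ((n:ℝ)+2)^α + ((n:ℝ))^α ≤ 2*(((n:ℝ)+1)^α)) hΓ.le]

include hα0 hα1 in
lemma aux_omega_convex (n : ℕ) :
    2 * omegaW α (n+1) ≤ omegaW α n + omegaW α (n+2) := by
  have hΓ : 0 < Real.Gamma (α+1) := Real.Gamma_pos_of_pos (by linarith)
  have h := (aux_phi_convex hα0 hα1).2
    (show ((n:ℝ)) ∈ Set.Ici (0:ℝ) from Set.mem_Ici.mpr (Nat.cast_nonneg n))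
    (show ((n:ℝ)+2) ∈ Set.Ici (0:ℝ) from Set.mem_Ici.mpr (by positivity))
    (by norm_num : (0:ℝ) ≤ 1/2) (by norm_num : (0:ℝ) ≤ 1/2) (by norm_num)
  simp only [smul_eq_mul] at h
  rw [show (1/2 : ℝ) * (n:ℝ) + (1/2) * ((n:ℝ)+2) = (n:ℝ)+1 by ring] at h
  rw [show ((n:ℝ)+1+1) = (n:ℝ)+2 by ring] at h
  unfold omegaW
  rw [← add_div, ← mul_div_assoc, div_le_div_iff₀ hΓ hΓ]
  push_cast
  rw [show ((n:ℝ)+1+1) = (n:ℝ)+2 by ring]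
  nlinarith [mul_le_mul_of_nonneg_right
    (by linarith : 2*(((n:ℝ)+2)^α - ((n:ℝ)+1)^α)
      ≤ ((n:ℝ)+1)^α - ((n:ℝ))^α + (((n:ℝ)+2+1)^α - ((n:ℝ)+2)^α)) hΓ.le]

end omegaProps


theorem stmt_19 (α : ℝ) (hα0 : 0 < α) (hα1 : α < 1) :
    ∀ ξ : ℂ, ‖ξ‖ < 1 →
      1 / (2 * Real.Gamma (α + 1))
        ≤ ‖∑' n : ℕ, ((omegaW α n : ℝ) : ℂ) * ξ ^ n‖ := by
  intro ξ hξ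
  have hΓ : 0 < Real.Gamma (α+1) := Real.Gamma_pos_of_pos (by linarith)
  have hω0 : omegaW α 0 = 1 / Real.Gamma (α+1) := by
    unfold omegaW
    push_cast
    norm_num [Real.zero_rpow hα0.ne', Real.one_rpow]
  have homega_le0 : ∀ n, omegaW α n ≤ omegaW α 0 := by
    intro n
    induction n with
    | zero => exact le_refl _
    | succ n ih => exact le_trans (aux_omega_anti hα0 hα1 n) ih
  by_cases hξ0 : ξ = 0
  · subst hξ0
    have : ∑' n : ℕ, ((omegaW α n : ℝ) : ℂ) * (0:ℂ) ^ n = ((omegaW α 0 : ℝ) : ℂ) := by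
      rw [tsum_eq_single 0 (fun n hn => by rw [zero_pow hn, mul_zero])]
      norm_num
    rw [this, Complex.norm_real, Real.norm_eq_abs, abs_of_nonneg (aux_omega_nonneg hα0 0), hω0]
    rw [div_le_div_iff₀ (by linarith) hΓ]
    linarith
  · set r : ℝ := ‖ξ‖ with hrdef
    have hr0 : 0 < r := norm_pos_iff.mpr hξ0
    have hr1 : r < 1 := hξ
    set z : ℂ := ξ / (r : ℂ) with hzdef
    have hrC : (r : ℂ) ≠ 0 := by
      simpa using hr0.ne'
    have hz : ‖z‖ = 1 := by
      rw [hzdef, norm_div, Complex.norm_real, Real.norm_eq_abs, abs_of_nonneg hr0.le]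
      field_simp
      exact hrdef.symm
    have hξz : ξ = (r : ℂ) * z := by
      rw [hzdef]; field_simp
    set c : ℕ → ℝ := fun n => omegaW α n * r ^ n with hcdef
    set p : ℕ → ℝ := fun n => (z ^ n).re with hpdef
    have term_eq : ∀ n : ℕ, (((omegaW α n : ℝ) : ℂ) * ξ ^ n).re = c n * p n := by
      intro n
      rw [hξz, mul_pow, ← mul_assoc, ← Complex.ofReal_pow, ← Complex.ofReal_mul,
        Complex.re_ofReal_mul]
    have hnorm : ∀ n : ℕ, ‖((omegaW α n : ℝ) : ℂ) * ξ ^ n‖ ≤ omegaW α 0 * r ^ n := by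
      intro n
      rw [norm_mul, norm_pow, ← hrdef,
        Complex.norm_real, Real.norm_eq_abs, abs_of_nonneg (aux_omega_nonneg hα0 n)]
      exact mul_le_mul_of_nonneg_right (homega_le0 n) (pow_nonneg hr0.le n)
    have hgeosum : Summable (fun n : ℕ => omegaW α 0 * r ^ n) :=
      (summable_geometric_of_lt_one hr0.le hr1).mul_left _
    have hsumC : Summable (fun n : ℕ => ((omegaW α n : ℝ) : ℂ) * ξ ^ n) :=
      Summable.of_norm_bounded hgeosum hnorm
    have hp1 : ∀ n, |p n| ≤ 1 := by
      intro n
      rw [hpdef]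
      calc |(z ^ n).re| ≤ ‖z ^ n‖ := Complex.abs_re_le_norm _
      _ = 1 := by rw [norm_pow, hz, one_pow]
    have hsumR : Summable (fun n : ℕ => c n * p n) := by
      refine Summable.of_norm_bounded hgeosum (fun n => ?_)
      rw [Real.norm_eq_abs, abs_mul]
      have h1 : |c n| = omegaW α n * r ^ n := by
        rw [hcdef, abs_of_nonneg (mul_nonneg (aux_omega_nonneg hα0 n) (pow_nonneg hr0.le n))]
      rw [h1]
      calc omegaW α n * r ^ n * |p n| ≤ omegaW α n * r ^ n * 1 :=
            mul_le_mul_of_nonneg_left (hp1 n)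
              (mul_nonneg (aux_omega_nonneg hα0 n) (pow_nonneg hr0.le n))
      _ = omegaW α n * r ^ n := mul_one _
      _ ≤ omegaW α 0 * r ^ n :=
            mul_le_mul_of_nonneg_right (homega_le0 n) (pow_nonneg hr0.le n)
    -- apply the key lemma
    have hkey : c 0 / 2 ≤ ∑' n, c n * p n := by
      apply aux_key c p hsumR
      · exact fun n => mul_nonneg (aux_omega_nonneg hα0 n) (pow_nonneg hr0.le n)
      · intro n
        exact mul_le_mul (aux_omega_anti hα0 hα1 n)
          (pow_le_pow_of_le_one hr0.le hr1.le (Nat.le_succ n))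
          (pow_nonneg hr0.le (n+1)) (aux_omega_nonneg hα0 n)
      · intro n
        have e1 : r^(n+1) = r^n * r := pow_succ r n
        have e2 : r^(n+2) = r^n * (r*r) := by rw [pow_succ, pow_succ]; ring
        have hω2 : omegaW α (n+2) ≤ omegaW α (n+1) := aux_omega_anti hα0 hα1 (n+1)
        have hω1 : omegaW α (n+1) ≤ omegaW α n := aux_omega_anti hα0 hα1 n
        have hωc := aux_omega_convex hα0 hα1 n
        have k1 : 0 ≤ r^n * (1-r) * (omegaW α n - omegaW α (n+2) * r) := by
          apply mul_nonneg (mul_nonneg (pow_nonneg hr0.le n) (by linarith))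
          nlinarith [aux_omega_nonneg hα0 (n+2)]
        have k2 : 0 ≤ r^n * r * (omegaW α n + omegaW α (n+2) - 2 * omegaW α (n+1)) := by
          apply mul_nonneg (mul_nonneg (pow_nonneg hr0.le n) hr0.le)
          linarith
        show 2 * (omegaW α (n+1) * r^(n+1)) ≤ omegaW α n * r^n + omegaW α (n+2) * r^(n+2)
        rw [e1, e2]
        nlinarith [k1, k2]
      · -- Tendsto (fun n => c n * (n+1)) atTop (𝓝 0)
        have hs1 : Summable (fun n : ℕ => ((n:ℝ)+1) * r ^ n) := by
          have h1 := summable_pow_mul_geometric_of_norm_lt_one 1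
            (by rwa [Real.norm_eq_abs, abs_of_nonneg hr0.le] : ‖r‖ < 1)
          have h2 := summable_geometric_of_lt_one hr0.le hr1
          have := h1.add h2
          refine this.congr (fun n => ?_)
          push_cast
          ring
        have hgeo : Tendsto (fun n : ℕ => ((n:ℝ)+1) * r ^ n) atTop (𝓝 0) :=
          hs1.tendsto_atTop_zero
        have hgeo2 : Tendsto (fun n : ℕ => omegaW α 0 * (((n:ℝ)+1) * r ^ n)) atTop (𝓝 0) := by
          simpa using hgeo.const_mul (omegaW α 0)
        refine squeeze_zero (fun n => ?_) (fun n => ?_) hgeo2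
        · exact mul_nonneg (mul_nonneg (aux_omega_nonneg hα0 n) (pow_nonneg hr0.le n))
            (by positivity)
        · show omegaW α n * r ^ n * ((n:ℝ)+1) ≤ omegaW α 0 * (((n:ℝ)+1) * r ^ n)
          have := mul_le_mul_of_nonneg_right
            (mul_le_mul_of_nonneg_right (homega_le0 n) (pow_nonneg hr0.le n))
            (by positivity : (0:ℝ) ≤ (n:ℝ)+1)
          calc omegaW α n * r ^ n * ((n:ℝ)+1) ≤ omegaW α 0 * r ^ n * ((n:ℝ)+1) := this
          _ = omegaW α 0 * (((n:ℝ)+1) * r ^ n) := by ring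
      · exact hp1
      · exact aux_fejer z hz
    have hre : (∑' n : ℕ, ((omegaW α n : ℝ) : ℂ) * ξ ^ n).re = ∑' n, c n * p n := by
      rw [Complex.re_tsum hsumC]
      exact tsum_congr term_eq
    have hc0 : c 0 = 1 / Real.Gamma (α+1) := by
      rw [hcdef]
      simp [hω0]
    calc 1 / (2 * Real.Gamma (α+1)) = c 0 / 2 := by rw [hc0]; ring
    _ ≤ ∑' n, c n * p n := hkey
    _ = (∑' n : ℕ, ((omegaW α n : ℝ) : ℂ) * ξ ^ n).re := hre.symm
    _ ≤ ‖∑' n : ℕ, ((omegaW α n : ℝ) : ℂ) * ξ ^ n‖ := Complex.re_le_norm _
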